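/- Let N be a special convenient integral Newton-polygon datum with r ≥ 2 edges satisfying conditions (R1)–(R3). Then its reduction R(N) is a special convenient integral Newton-polygon datum with r−1 edges that again satisfies conditions (R1)–(R3). -/

import Mathlib

/-- A canonical Newton-polygon datum with `r` edges: a pair of `1`-indexed sequences
`(L, M)` of positive rationals with strictly increasing inclinations `L k / M k`. -/
def IsCanonicalNP (p : (ℕ → ℚ) × (ℕ → ℚ)) (r : ℕ) : Prop :=
  (∀ k, 1 ≤ k → k ≤ r → 0 < p.1 k ∧ 0 < p.2 k) ∧
  ∀ k, 1 ≤ k → k < r → p.1 k / p.2 k < p.1 (k + 1) / p.2 (k + 1)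

/-- An integral datum: all the entries are positive integers. -/
def IsIntegralNP (p : (ℕ → ℚ) × (ℕ → ℚ)) (r : ℕ) : Prop :=
  ∀ k, 1 ≤ k → k ≤ r →
    (∃ a : ℕ, 0 < a ∧ p.1 k = a) ∧ (∃ b : ℕ, 0 < b ∧ p.2 k = b)

/-- A special datum: all the inclinations are greater than `1`. -/
def IsSpecialNP (p : (ℕ → ℚ) × (ℕ → ℚ)) (r : ℕ) : Prop :=
  ∀ k, 1 ≤ k → k ≤ r → 1 < p.1 k / p.2 k

/-- The height `ht(N) = M_1 + ⋯ + M_r` of a Newton-polygon datum with `r` edges. -/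
def htNP (p : (ℕ → ℚ) × (ℕ → ℚ)) (r : ℕ) : ℚ := ∑ k ∈ Finset.Icc 1 r, p.2 k

/-- The reduction `R(N)`, with `L'_i = L_{i+1} − (L_1/(1+M_1))·M_{i+1}` and
`M'_i = M_{i+1}/(1+M_1)`; its iterates give `R^i(N)` via `redNP^[i] p`. -/
def redNP (p : (ℕ → ℚ) × (ℕ → ℚ)) : (ℕ → ℚ) × (ℕ → ℚ) :=
  (fun i => p.1 (i + 1) - (p.1 1 / (1 + p.2 1)) * p.2 (i + 1),
   fun i => p.2 (i + 1) / (1 + p.2 1))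

/-- Condition (R1): `1 + ht(N) < L_1/M_1`. -/
def CondR1 (p : (ℕ → ℚ) × (ℕ → ℚ)) (r : ℕ) : Prop :=
  1 + htNP p r < p.1 1 / p.2 1

/-- Condition (R2): for `0 ≤ i ≤ r−1`, all entries of `R^i(N)` are integers and
`L^{(i)}_1/M^{(i)}_1` is a (natural) integer. -/
def CondR2 (p : (ℕ → ℚ) × (ℕ → ℚ)) (r : ℕ) : Prop :=
  ∀ i, i ≤ r - 1 →
    (∀ k, 1 ≤ k → k ≤ r - i →
      (∃ a : ℤ, (redNP^[i] p).1 k = a) ∧ (∃ b : ℤ, (redNP^[i] p).2 k = b)) ∧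
    ∃ a : ℕ, (redNP^[i] p).1 1 / (redNP^[i] p).2 1 = a

/-- Condition (R3): for `0 ≤ i ≤ r−1`,
`(1 + M^{(i)}_1)·gcd(L^{(i)}_1/M^{(i)}_1, 1 + ht(R^i(N))) = 1 + ht(R^i(N))`
(the gcd of the two integer-valued rationals being taken via their numerators). -/
def CondR3 (p : (ℕ → ℚ) × (ℕ → ℚ)) (r : ℕ) : Prop :=
  ∀ i, i ≤ r - 1 →
    (1 + (redNP^[i] p).2 1) *
      (Nat.gcd ((redNP^[i] p).1 1 / (redNP^[i] p).2 1).num.natAbs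
        (1 + htNP (redNP^[i] p) (r - i)).num.natAbs : ℚ)
    = 1 + htNP (redNP^[i] p) (r - i)

/-- If a special convenient integral Newton-polygon datum `N` with
`r ≥ 2` edges satisfies conditions (R1)–(R3), then its reduction `R(N)` is a special
convenient integral Newton-polygon datum with `r − 1` edges again satisfying (R1)–(R3). -/
theorem reduction_preserves_conditions
    (p : (ℕ → ℚ) × (ℕ → ℚ)) (r : ℕ) (hr : 2 ≤ r)
    (hc : IsCanonicalNP p r) (hi : IsIntegralNP p r) (hs : IsSpecialNP p r)
    (h1 : CondR1 p r) (h2 : CondR2 p r) (h3 : CondR3 p r) :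
    IsCanonicalNP (redNP p) (r - 1) ∧ IsIntegralNP (redNP p) (r - 1) ∧
    IsSpecialNP (redNP p) (r - 1) ∧
    CondR1 (redNP p) (r - 1) ∧ CondR2 (redNP p) (r - 1) ∧ CondR3 (redNP p) (r - 1) := by
  obtain ⟨hpos, hincr⟩ := hc
  have h1r : (1:ℕ) ≤ r := by omega
  have hM1 : 0 < p.2 1 := (hpos 1 le_rfl h1r).2
  have hL1 : 0 < p.1 1 := (hpos 1 le_rfl h1r).1
  have hden : (0:ℚ) < 1 + p.2 1 := by linarith
  have hden' : (1 + p.2 1) ≠ 0 := ne_of_gt hden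
  have mono : ∀ k, 1 ≤ k → k ≤ r → p.1 1 / p.2 1 ≤ p.1 k / p.2 k := by
    intro k h1k hkr
    induction k with
    | zero => omega
    | succ n ih =>
      by_cases hn : n = 0
      · subst hn; exact le_rfl
      · exact le_trans (ih (by omega) (by omega))
          (le_of_lt (hincr n (by omega) (by omega)))
  have cross : ∀ k, 1 ≤ k → k ≤ r → p.1 1 * p.2 k ≤ p.1 k * p.2 1 := by
    intro k h1k hkr
    have hMk := (hpos k h1k hkr).2
    exact (div_le_div_iff₀ hM1 hMk).mp (mono k h1k hkr)
  have crossS : ∀ k, 1 ≤ k → k ≤ r → p.2 k < p.1 k := by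
    intro k h1k hkr
    have hMk := (hpos k h1k hkr).2
    have hss := hs k h1k hkr
    rw [lt_div_iff₀ hMk] at hss
    linarith
  have crossI : ∀ k, 1 ≤ k → k < r → p.1 k * p.2 (k+1) < p.1 (k+1) * p.2 k := by
    intro k h1k hkr
    have ha := (hpos k h1k (by omega)).2
    have hb := (hpos (k+1) (by omega) (by omega)).2
    exact (div_lt_div_iff₀ ha hb).mp (hincr k h1k hkr)
  have hLpos : ∀ k, 1 ≤ k → k ≤ r - 1 → 0 < (redNP p).1 k := by
    intro k h1k hkr
    have hMk := (hpos (k+1) (by omega) (by omega)).2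
    have hLk := (hpos (k+1) (by omega) (by omega)).1
    have hck := cross (k+1) (by omega) (by omega)
    show 0 < p.1 (k+1) - p.1 1 / (1 + p.2 1) * p.2 (k+1)
    rw [sub_pos, div_mul_eq_mul_div, div_lt_iff₀ hden]
    nlinarith
  have hMpos : ∀ k, 1 ≤ k → k ≤ r - 1 → 0 < (redNP p).2 k := by
    intro k h1k hkr
    exact div_pos ((hpos (k+1) (by omega) (by omega)).2) hden
  have incl : ∀ k, 1 ≤ k → k ≤ r - 1 →
      (redNP p).1 k / (redNP p).2 k
        = (p.1 (k+1) * (1 + p.2 1) - p.1 1 * p.2 (k+1)) / p.2 (k+1) := by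
    intro k h1k hkr
    have hMk : p.2 (k+1) ≠ 0 := ne_of_gt ((hpos (k+1) (by omega) (by omega)).2)
    simp only [redNP]
    field_simp
  have hcan : IsCanonicalNP (redNP p) (r-1) := by
    refine ⟨fun k h1k hkr => ⟨hLpos k h1k hkr, hMpos k h1k hkr⟩, ?_⟩
    intro k h1k hkr
    rw [incl k h1k (by omega), incl (k+1) (by omega) (by omega)]
    have hM2 := (hpos (k+1) (by omega) (by omega)).2
    have hM3 := (hpos (k+1+1) (by omega) (by omega)).2
    rw [div_lt_div_iff₀ hM2 hM3]
    have hci := crossI (k+1) (by omega) (by omega)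
    nlinarith [mul_lt_mul_of_pos_left hci hM1]
  have hspec : IsSpecialNP (redNP p) (r-1) := by
    intro k h1k hkr
    rw [incl k h1k hkr]
    have hM2 := (hpos (k+1) (by omega) (by omega)).2
    rw [lt_div_iff₀ hM2]
    have hA := cross (k+1) (by omega) (by omega)
    have hB := crossS (k+1) (by omega) (by omega)
    linarith
  -- height computation
  have hsum : ∀ n : ℕ, ∑ k ∈ Finset.Icc 1 n, p.2 (k+1)
      = ∑ k ∈ Finset.Icc 2 (n+1), p.2 k := by
    intro n
    induction n with
    | zero => simp
    | succ m ih =>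
      have e1 : ∑ k ∈ Finset.Icc 1 (m+1), p.2 (k+1)
          = (∑ k ∈ Finset.Icc 1 m, p.2 (k+1)) + p.2 (m+1+1) :=
        Finset.sum_Icc_succ_top (by omega) _
      have e2 : ∑ k ∈ Finset.Icc 2 (m+1+1), p.2 k
          = (∑ k ∈ Finset.Icc 2 (m+1), p.2 k) + p.2 (m+1+1) :=
        Finset.sum_Icc_succ_top (by omega) _
      rw [e1, ih, e2]
  have hsplit : htNP p r = p.2 1 + ∑ k ∈ Finset.Icc 2 r, p.2 k := by
    rw [htNP, ← Finset.Ioc_insert_left h1r, Finset.sum_insert Finset.left_notMem_Ioc]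
    norm_num [← Finset.Icc_add_one_left_eq_Ioc]
  have hht : htNP (redNP p) (r-1) = (htNP p r - p.2 1) / (1 + p.2 1) := by
    rw [htNP]
    have hrd : ∀ k, (redNP p).2 k = p.2 (k+1) / (1 + p.2 1) := fun k => rfl
    simp_rw [hrd]
    rw [← Finset.sum_div, hsum (r-1), show r - 1 + 1 = r by omega, hsplit]
    ring
  have hr1 : CondR1 (redNP p) (r-1) := by
    unfold CondR1
    rw [hht, incl 1 le_rfl (by omega)]
    have hM2 := (hpos (1+1) (by omega) (by omega)).2
    have hL2 := (hpos (1+1) (by omega) (by omega)).1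
    have hb := crossI 1 le_rfl (by omega)
    rw [CondR1, lt_div_iff₀ hM1] at h1
    have e : 1 + (htNP p r - p.2 1)/(1+p.2 1) = (1 + htNP p r)/(1+p.2 1) := by
      field_simp
      ring
    rw [e, div_lt_div_iff₀ hden hM2]
    have hx : (1 + htNP p r) * p.2 (1+1) < p.1 (1+1) := by
      nlinarith [mul_lt_mul_of_pos_right h1 hM2]
    have h5 : p.1 (1+1) < p.1 (1+1) * (1 + p.2 1) - p.1 1 * p.2 (1+1) := by
      nlinarith
    have h6 : (0:ℚ) < p.1 (1+1) * (1 + p.2 1) - p.1 1 * p.2 (1+1) := by linarith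
    nlinarith [mul_pos h6 hM1]
  have key : ∀ q : ℚ, 0 < q → (∃ a : ℤ, q = a) → ∃ n : ℕ, 0 < n ∧ q = n := by
    rintro q hq ⟨a, rfl⟩
    have ha : 0 < a := by exact_mod_cast hq
    refine ⟨a.toNat, by omega, ?_⟩
    exact_mod_cast (Int.toNat_of_nonneg ha.le).symm
  have hintg : IsIntegralNP (redNP p) (r-1) := by
    intro k h1k hkr
    have h21 := (h2 1 (by omega)).1 k h1k hkr
    simp only [Function.iterate_one] at h21
    obtain ⟨ea, eb⟩ := h21
    exact ⟨key _ (hLpos k h1k hkr) ea, key _ (hMpos k h1k hkr) eb⟩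
  have hr2 : CondR2 (redNP p) (r-1) := by
    intro i hi
    have h := h2 (i+1) (by omega)
    rw [Function.iterate_succ_apply] at h
    have heq : r - 1 - i = r - (i+1) := by omega
    rw [heq]
    exact h
  have hr3 : CondR3 (redNP p) (r-1) := by
    intro i hi
    have h := h3 (i+1) (by omega)
    rw [Function.iterate_succ_apply] at h
    have heq : r - 1 - i = r - (i+1) := by omega
    rw [heq]
    exact h
  exact ⟨hcan, hintg, hspec, hr1, hr2, hr3⟩
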